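/- arXiv:2204.09285 — 9 statements merged into one kernel-verified Lean document; each statement's English description precedes it below -/
import Mathlib

section
/- For a small category C, the category of gaps J(C) is equivalent to the comma category Comma (𝟭 (Cᵒᵖ ⥤ Type)) Spec of the Isbell adjunction (equivalently, to the isomorphic comma category of O over the identity of (C ⥤ Type)ᵒᵖ). -/
open CategoryTheory Opposite

universe u

variable (C : Type u) [SmallCategory C]

/-- The Isbell conjugation functor `O`, sending a presheaf `A : Cᵒᵖ ⥤ Type` to the copresheaf
`c ↦ Nat(A, yoneda.obj c)` of cocones under `A`. -/
def isbellO : (Cᵒᵖ ⥤ Type u) ⥤ (C ⥤ Type u)ᵒᵖ :=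
  (coyoneda ⋙ (Functor.whiskeringLeft C (Cᵒᵖ ⥤ Type u) (Type u)).obj yoneda).rightOp

/-- The Isbell conjugation functor `Spec`, sending a copresheaf `B : C ⥤ Type` to the presheaf
`c ↦ Nat(B, C(c, −))` of cones over `B`. -/
def isbellSpec : (C ⥤ Type u)ᵒᵖ ⥤ (Cᵒᵖ ⥤ Type u) :=
  coyoneda ⋙ (Functor.whiskeringLeft Cᵒᵖ (C ⥤ Type u) (Type u)).obj coyoneda

/-- The functor `Cᵒᵖ × C ⥤ Type` sending `(x, y)` to `A(x) × B(y)`. -/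
@[simps]
def gapDom (A : Cᵒᵖ ⥤ Type u) (B : C ⥤ Type u) : Cᵒᵖ × C ⥤ Type u where
  obj x := A.obj x.1 × B.obj x.2
  map f := TypeCat.ofHom (fun p => (A.map f.1 p.1, B.map f.2 p.2))
  map_id := by
    intro x
    ext p <;> simp [TypeCat.Fun.toFun_apply]
  map_comp := by
    intro x y z f g
    ext p <;> simp [TypeCat.Fun.toFun_apply]

/-- A gap from a presheaf `A` to a copresheaf `B` is a natural transformation from
`(x, y) ↦ A(x) × B(y)` to the hom functor `(x, y) ↦ C(x, y)`. -/
def Gaps (A : Cᵒᵖ ⥤ Type u) (B : C ⥤ Type u) : Type u :=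
  gapDom C A B ⟶ Functor.hom C

/-- Functoriality of the gap domain: `gapDomMap f g : A' × B' ⟶ A × B` for `f : A' ⟶ A` and
`g : B' ⟶ B`. -/
@[simps]
def gapDomMap {A A' : Cᵒᵖ ⥤ Type u} {B B' : C ⥤ Type u} (f : A' ⟶ A) (g : B' ⟶ B) :
    gapDom C A' B' ⟶ gapDom C A B where
  app x := TypeCat.ofHom (fun p => (f.app x.1 p.1, g.app x.2 p.2))
  naturality := by
    intro x y h
    ext p
    dsimp
    exact Prod.ext (NatTrans.naturality_apply f h.1 p.1) (NatTrans.naturality_apply g h.2 p.2)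

/-- An object of the category of gaps: a presheaf `A`, a copresheaf `B`, and a gap `φ`
from `A` to `B`. -/
structure GapObj where
  A : Cᵒᵖ ⥤ Type u
  B : C ⥤ Type u
  φ : Gaps C A B

variable {C}

/-- A morphism of gaps `(A, B, φ) → (A′, B′, φ′)`: a presheaf map `f : A ⟶ A′` and a
copresheaf map `g : B′ ⟶ B` such that `φ′(f a, b′) = φ(a, g b′)` for all `a, b′`. -/
@[ext]
structure GapHom (P Q : GapObj C) where
  f : P.A ⟶ Q.A
  g : Q.B ⟶ P.B
  w : gapDomMap C f (𝟙 Q.B) ≫ Q.φ = gapDomMap C (𝟙 P.A) g ≫ P.φ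

instance : Category (GapObj C) where
  Hom := GapHom
  id P := { f := 𝟙 P.A, g := 𝟙 P.B, w := rfl }
  comp u v :=
    { f := u.f ≫ v.f
      g := v.g ≫ u.g
      w := by
        apply NatTrans.ext
        funext x
        ext p
        show (_ : _) = _
        have hu := types_congr_hom (congrFun (congrArg NatTrans.app u.w) x) ((p.1, v.g.app x.2 p.2) : _ × _)
        have hv := types_congr_hom (congrFun (congrArg NatTrans.app v.w) x) ((u.f.app x.1 p.1, p.2) : _ × _)
        exact hv.trans hu }
  id_comp := by intros; apply GapHom.ext <;> simp
  comp_id := by intros; apply GapHom.ext <;> simp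
  assoc := by intros; apply GapHom.ext <;> simp

/-- From a gap to a map into `Spec`. -/
def gapToHom (P : GapObj C) : P.A ⟶ (isbellSpec C).obj (op P.B) where
  app x := TypeCat.ofHom fun a =>
    { app := fun y => TypeCat.ofHom fun b => P.φ.app (x, y) (a, b)
      naturality := fun y y' h => by
        ext b
        have := types_congr_hom (P.φ.naturality ((𝟙 x, h) : ((x, y) : Cᵒᵖ × C) ⟶ (x, y'))) ((a, b) : (gapDom C P.A P.B).obj (x, y))
        change P.φ.app (x, y') (P.A.map (𝟙 x) a, P.B.map h b) = (𝟙 x).unop ≫ P.φ.app (x, y) (a, b) ≫ h at this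
        change P.φ.app (x, y') (a, P.B.map h b) = P.φ.app (x, y) (a, b) ≫ h
        simpa using this }
  naturality := fun x x' h => by
    ext a
    apply NatTrans.ext
    ext y b
    have := types_congr_hom (P.φ.naturality ((h, 𝟙 y) : ((x, y) : Cᵒᵖ × C) ⟶ (x', y))) ((a, b) : (gapDom C P.A P.B).obj (x, y))
    change P.φ.app (x', y) (P.A.map h a, P.B.map (𝟙 y) b) = h.unop ≫ P.φ.app (x, y) (a, b) ≫ 𝟙 y at this
    change P.φ.app (x', y) (P.A.map h a, b) = h.unop ≫ P.φ.app (x, y) (a, b)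
    have e : ∀ g : unop x ⟶ y, g ≫ 𝟙 y = g := fun g => Category.comp_id g
    have e' : P.B.map (𝟙 y) b = b := by simp
    exact ((congrArg (fun t => P.φ.app (x', y) (P.A.map h a, t)) e'.symm).trans this).trans (congrArg (fun t => h.unop ≫ t) (e _))

/-- From a map into `Spec` to a gap. -/
def homToGap {A : Cᵒᵖ ⥤ Type u} {B : C ⥤ Type u} (η : A ⟶ (isbellSpec C).obj (op B)) :
    Gaps C A B where
  app x := TypeCat.ofHom fun (p : A.obj x.1 × B.obj x.2) => (η.app x.1 p.1).app x.2 p.2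
  naturality := fun x y h => by
    ext p
    have h1 := types_congr_hom (η.naturality h.1) p.1
    have h2 := types_congr_hom ((η.app x.1 p.1).naturality h.2) p.2
    change η.app y.1 (A.map h.1 p.1) = η.app x.1 p.1 ≫ coyoneda.map h.1 at h1
    change (η.app x.1 p.1).app y.2 (B.map h.2 p.2) = (η.app x.1 p.1).app x.2 p.2 ≫ h.2 at h2
    change (η.app y.1 (A.map h.1 p.1)).app y.2 (B.map h.2 p.2) = h.1.unop ≫ (η.app x.1 p.1).app x.2 p.2 ≫ h.2
    rw [h1]
    change h.1.unop ≫ (η.app x.1 p.1).app y.2 (B.map h.2 p.2) = _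
    rw [h2]

variable (C)

/-- The forward functor. -/
def gapsToComma : GapObj C ⥤ Comma (𝟭 (Cᵒᵖ ⥤ Type u)) (isbellSpec C) where
  obj P := ⟨P.A, op P.B, gapToHom P⟩
  map u :=
    { left := u.f
      right := u.g.op
      w := by
        apply NatTrans.ext
        ext x a
        apply NatTrans.ext
        ext y b
        have := types_congr_hom (congrFun (congrArg NatTrans.app u.w) (x, y)) ((a, b) : _ × _)
        dsimp [isbellSpec, gapToHom, Functor.hom, gapDom] at this ⊢
        exact this }

/-- The backward functor. -/
def commaToGaps : Comma (𝟭 (Cᵒᵖ ⥤ Type u)) (isbellSpec C) ⥤ GapObj C where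
  obj X := ⟨X.left, X.right.unop, homToGap X.hom⟩
  map u :=
    { f := u.left
      g := u.right.unop
      w := by
        apply NatTrans.ext
        funext x
        ext p
        have := types_congr_hom (congrFun (congrArg NatTrans.app u.w) x.1) p.1
        dsimp [isbellSpec, homToGap, Functor.hom, gapDom] at this ⊢
        exact types_congr_hom (congrFun (congrArg NatTrans.app this) x.2) p.2 }

/-- For a small category `C`, the category of gaps in `C` is equivalent to the comma category
`Comma (𝟭 (Cᵒᵖ ⥤ Type)) Spec` of the Isbell adjunction. -/
theorem gapCategory_equiv_comma :
    Nonempty (GapObj C ≌ Comma (𝟭 (Cᵒᵖ ⥤ Type u)) (isbellSpec C)) := by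
  exact ⟨CategoryTheory.Equivalence.mk (gapsToComma C) (commaToGaps C)
    (NatIso.ofComponents (fun P => Iso.refl _) (by intros; rfl))
    (NatIso.ofComponents (fun X => Iso.refl _) (by intros; rfl))⟩
end

section
/- For any adjunction F ⊣ G with F : A ⥤ B and G : B ⥤ A, the adjunction factors through the comma category: (1) the domain projection Dom : Comma (𝟭 A) G ⥤ A (sending (a, b, u) to a) has a fully faithful left adjoint J sending a to (a, F a, η_a : a ⟶ G(F a)); (2) the codomain projection Cod : Comma (𝟭 A) G ⥤ B (sending (a, b, u) to b) has a fully faithful right adjoint K sending b to (G b, b, 𝟙_{G b}); and (3) J ⋙ Cod = F and K ⋙ Dom = G, so F ⊣ G is the composite of the coreflection J ⊣ Dom and the reflection Cod ⊣ K. -/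
open CategoryTheory

universe v₁ u₁ v₂ u₂

variable {A : Type u₁} [Category.{v₁} A] {B : Type u₂} [Category.{v₂} B]

/-- The functor `A ⥤ Comma (𝟭 A) G` sending `a` to `(a, F a, η_a : a ⟶ G (F a))`. -/
@[simps]
def commaUnitEmbedding (F : A ⥤ B) (G : B ⥤ A) (adj : F ⊣ G) : A ⥤ Comma (𝟭 A) G where
  obj a := { left := a, right := F.obj a, hom := adj.unit.app a }
  map f := { left := f, right := F.map f, w := adj.unit.naturality f }

/-- The functor `B ⥤ Comma (𝟭 A) G` sending `b` to `(G b, b, 𝟙_{G b})`. -/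
@[simps]
def commaCounitEmbedding (F : A ⥤ B) (G : B ⥤ A) : B ⥤ Comma (𝟭 A) G where
  obj b := { left := G.obj b, right := b, hom := 𝟙 (G.obj b) }
  map g := { left := G.map g, right := g, w := by simp }

def commaUnitAdj (F : A ⥤ B) (G : B ⥤ A) (adj : F ⊣ G) :
    commaUnitEmbedding F G adj ⊣ Comma.fst (𝟭 A) G :=
  Adjunction.mkOfHomEquiv
    { homEquiv := fun a X =>
        { toFun := fun f => f.left
          invFun := fun f =>
            { left := f
              right := (adj.homEquiv a X.right).symm (f ≫ X.hom)
              w := by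
                show f ≫ X.hom = adj.unit.app a ≫ G.map ((adj.homEquiv a X.right).symm (f ≫ X.hom))
                exact ((by rw [adj.homEquiv_unit]; rfl : adj.unit.app a ≫ G.map ((adj.homEquiv a X.right).symm (f ≫ X.hom)) = _).trans (Equiv.apply_symm_apply _ _)).symm }
          left_inv := fun f => by
            ext
            · rfl
            · have := f.w
              simp at this
              dsimp only
              exact (Equiv.symm_apply_eq _).2 (this.trans (adj.homEquiv_unit ..).symm)
          right_inv := fun f => rfl }
      homEquiv_naturality_left_symm := fun f g => by
        ext
        · rfl
        · show (adj.homEquiv _ _).symm ((f ≫ g) ≫ _) = F.map f ≫ (adj.homEquiv _ _).symm (g ≫ _)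
          exact (congrArg _ (Category.assoc _ _ _)).trans (adj.homEquiv_naturality_left_symm ..)
      homEquiv_naturality_right := fun f g => rfl }

def commaCounitAdj (F : A ⥤ B) (G : B ⥤ A) :
    Comma.snd (𝟭 A) G ⊣ commaCounitEmbedding F G :=
  Adjunction.mkOfHomEquiv
    { homEquiv := fun X b =>
        { toFun := fun g =>
            { left := X.hom ≫ G.map g
              right := g
              w := by exact Category.comp_id _ }
          invFun := fun f => f.right
          left_inv := fun g => rfl
          right_inv := fun f => by
            ext
            · have := f.w
              simp at this ⊢
              exact this.symm.trans (Category.comp_id _)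
            · rfl }
      homEquiv_naturality_left_symm := fun f g => rfl
      homEquiv_naturality_right := fun f g => by
        ext
        · rename_i X _ _
          exact (congrArg (X.hom ≫ ·) (G.map_comp f g)).trans (Category.assoc _ _ _).symm
        · rfl }

/-- For any adjunction `F ⊣ G`, the adjunction factors through the comma category
`Comma (𝟭 A) G`: the domain projection has a fully faithful left adjoint `a ↦ (a, F a, η_a)`,
the codomain projection has a fully faithful right adjoint `b ↦ (G b, b, 𝟙)`, and composing
these (co)reflections recovers `F` and `G`. -/
theorem adjunction_factors_through_comma (F : A ⥤ B) (G : B ⥤ A) (adj : F ⊣ G) :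
    Nonempty (commaUnitEmbedding F G adj ⊣ Comma.fst (𝟭 A) G) ∧
    (commaUnitEmbedding F G adj).Full ∧ (commaUnitEmbedding F G adj).Faithful ∧
    Nonempty (Comma.snd (𝟭 A) G ⊣ commaCounitEmbedding F G) ∧
    (commaCounitEmbedding F G).Full ∧ (commaCounitEmbedding F G).Faithful ∧
    commaUnitEmbedding F G adj ⋙ Comma.snd (𝟭 A) G = F ∧
    commaCounitEmbedding F G ⋙ Comma.fst (𝟭 A) G = G := by
  refine ⟨⟨commaUnitAdj F G adj⟩, ?_, ?_, ⟨commaCounitAdj F G⟩, ?_, ?_, rfl, rfl⟩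
  · exact (commaUnitAdj F G adj).fullyFaithfulLOfCompIsoId (Iso.refl _) |>.full
  · exact (commaUnitAdj F G adj).fullyFaithfulLOfCompIsoId (Iso.refl _) |>.faithful
  · exact (commaCounitAdj F G).fullyFaithfulROfCompIsoId (Iso.refl _) |>.full
  · exact (commaCounitAdj F G).fullyFaithfulROfCompIsoId (Iso.refl _) |>.faithful
end

section
/- For any adjunction L ⊣ R, the nucleus functors form an adjunction N ⊣ M between the category of coalgebras of the induced comonad W and the category of algebras of the induced monad T; that is, N : Coalg(W) ⥤ Alg(T) and M : Alg(T) ⥤ Coalg(W) are well-defined functors and N is left adjoint to M. -/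
open CategoryTheory

universe v₁ u₁ v₂ u₂

variable {X : Type u₁} [Category.{v₁} X] {Y : Type u₂} [Category.{v₂} Y]

/-- The nucleus functor `N : Coalg(W) ⥤ Alg(T)`, sending a coalgebra `(B, β)` of the comonad
`W = L ∘ R` on `Y` to the algebra `(R B, R ε_B)` of the monad `T = R ∘ L` on `X`. -/
def nucleusN (L : X ⥤ Y) (R : Y ⥤ X) (adj : L ⊣ R) :
    Comonad.Coalgebra adj.toComonad ⥤ Monad.Algebra adj.toMonad where
  obj B :=
    { A := R.obj B.A
      a := R.map (adj.counit.app B.A)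
      unit := adj.right_triangle_components B.A
      assoc := by
        dsimp [Adjunction.toMonad]
        rw [← R.map_comp, ← R.map_comp, adj.counit_naturality] }
  map t :=
    { f := R.map t.f
      h := by
        dsimp [Adjunction.toMonad]
        rw [← R.map_comp, ← R.map_comp, adj.counit_naturality] }
  map_id := by
    intro B
    apply Monad.Algebra.Hom.ext
    exact R.map_id B.A
  map_comp := by
    intro B B' B'' t t'
    apply Monad.Algebra.Hom.ext
    exact R.map_comp t.f t'.f

/-- The nucleus functor `M : Alg(T) ⥤ Coalg(W)`, sending an algebra `(A, α)` of the monad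
`T = R ∘ L` on `X` to the coalgebra `(L A, L η_A)` of the comonad `W = L ∘ R` on `Y`. -/
def nucleusM (L : X ⥤ Y) (R : Y ⥤ X) (adj : L ⊣ R) :
    Monad.Algebra adj.toMonad ⥤ Comonad.Coalgebra adj.toComonad where
  obj A :=
    { A := L.obj A.A
      a := L.map (adj.unit.app A.A)
      counit := adj.left_triangle_components A.A
      coassoc := by
        dsimp [Adjunction.toComonad]
        rw [← L.map_comp, ← L.map_comp, adj.unit_naturality] }
  map f :=
    { f := L.map f.f
      h := by
        dsimp [Adjunction.toComonad]
        rw [← L.map_comp, ← L.map_comp, adj.unit_naturality] }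
  map_id := by
    intro A
    apply Comonad.Coalgebra.Hom.ext
    exact L.map_id A.A
  map_comp := by
    intro A A' A'' f f'
    apply Comonad.Coalgebra.Hom.ext
    exact L.map_comp f.f f'.f

/-- For any adjunction `L ⊣ R`, the nucleus functors form an adjunction `N ⊣ M` between the
category of coalgebras of the induced comonad and the category of algebras of the induced
monad. -/
theorem nucleus_adjunction (L : X ⥤ Y) (R : Y ⥤ X) (adj : L ⊣ R) :
    Nonempty (nucleusN L R adj ⊣ nucleusM L R adj) := by
  refine ⟨Adjunction.mkOfHomEquiv
    { homEquiv := fun B A =>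
        { toFun := fun f =>
            { f := B.a ≫ L.map f.f
              h := by
                have hf := f.h
                dsimp [Adjunction.toComonad, Adjunction.toMonad, nucleusN, nucleusM] at *
                have hco := B.coassoc
                dsimp [Adjunction.toComonad] at hco
                rw [R.map_comp, L.map_comp, ← Category.assoc, ← hco, Category.assoc,
                  Category.assoc, ← L.map_comp, ← L.map_comp, adj.unit_naturality] }
          invFun := fun g =>
            { f := R.map g.f ≫ A.a
              h := by
                have hg := g.h
                dsimp [Adjunction.toComonad, Adjunction.toMonad, nucleusN, nucleusM] at *
                have has := A.assoc
                dsimp [Adjunction.toMonad] at has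
                rw [L.map_comp, R.map_comp, Category.assoc, ← has, ← Category.assoc,
                  ← R.map_comp, adj.counit_naturality, R.map_comp, Category.assoc] }
          left_inv := by
            intro f
            apply Monad.Algebra.Hom.ext
            have hf := f.h
            dsimp [Adjunction.toComonad, Adjunction.toMonad, nucleusN, nucleusM] at *
            have hc := B.counit
            dsimp [Adjunction.toComonad] at hc
            rw [R.map_comp, Category.assoc, hf, ← Category.assoc, ← R.map_comp,
              hc, R.map_id, Category.id_comp]
          right_inv := by
            intro g
            apply Comonad.Coalgebra.Hom.ext
            have hg := g.h
            dsimp [Adjunction.toComonad, Adjunction.toMonad, nucleusN, nucleusM] at *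
            have hu := A.unit
            dsimp [Adjunction.toMonad] at hu
            rw [L.map_comp, ← Category.assoc, hg, Category.assoc, ← L.map_comp,
              hu, L.map_id, Category.comp_id] }
      homEquiv_naturality_left_symm := by
        intro B' B A t g
        apply Monad.Algebra.Hom.ext
        dsimp [nucleusN, nucleusM]
        exact (congrArg (· ≫ A.a) (R.map_comp t.f g.f)).trans (Category.assoc _ _ _)
      homEquiv_naturality_right := by
        intro B A A' f k
        apply Comonad.Coalgebra.Hom.ext
        dsimp [nucleusN, nucleusM]
        exact (congrArg (B.a ≫ ·) (L.map_comp f.f k.f)).trans (Category.assoc _ _ _).symm }⟩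
end

section
/- Let L ⊣ R be an adjunction, (A, α) a T-algebra and (B, β) a W-coalgebra. Then the assignments j ↦ β ≫ L j and k ↦ R k ≫ α are mutually inverse bijections between: (1) the set of morphisms j : R B ⟶ A in X that are T-algebra morphisms from (R B, R ε_B) to (A, α), and (2) the set of morphisms k : B ⟶ L A in Y that are W-coalgebra morphisms from (B, β) to (L A, L η_A). -/
open CategoryTheory

universe v₁ u₁ v₂ u₂

variable {X : Type u₁} [Category.{v₁} X] {Y : Type u₂} [Category.{v₂} Y]

/-- Let `L ⊣ R` be an adjunction, `(A, α)` an algebra for the monad `T = R ∘ L` and `(B, β)` a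
coalgebra for the comonad `W = L ∘ R`. Then `j ↦ β ≫ L j` and `k ↦ R k ≫ α` are mutually
inverse bijections between T-algebra morphisms `(R B, R ε_B) → (A, α)` and W-coalgebra
morphisms `(B, β) → (L A, L η_A)`. -/
theorem nucleus_transposition_bijection (L : X ⥤ Y) (R : Y ⥤ X) (adj : L ⊣ R)
    (A : X) (α : R.obj (L.obj A) ⟶ A)
    (hα_unit : adj.unit.app A ≫ α = 𝟙 A)
    (hα_assoc : R.map (adj.counit.app (L.obj A)) ≫ α = R.map (L.map α) ≫ α)
    (B : Y) (β : B ⟶ L.obj (R.obj B))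
    (hβ_counit : β ≫ adj.counit.app B = 𝟙 B)
    (hβ_coassoc : β ≫ L.map (adj.unit.app (R.obj B)) = β ≫ L.map (R.map β)) :
    ∃ (Φ : {j : R.obj B ⟶ A // R.map (L.map j) ≫ α = R.map (adj.counit.app B) ≫ j} →
           {k : B ⟶ L.obj A // β ≫ L.map (R.map k) = k ≫ L.map (adj.unit.app A)})
      (Ψ : {k : B ⟶ L.obj A // β ≫ L.map (R.map k) = k ≫ L.map (adj.unit.app A)} →
           {j : R.obj B ⟶ A // R.map (L.map j) ≫ α = R.map (adj.counit.app B) ≫ j}),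
      (∀ j, (Φ j).1 = β ≫ L.map j.1) ∧
      (∀ k, (Ψ k).1 = R.map k.1 ≫ α) ∧
      (∀ j, Ψ (Φ j) = j) ∧
      (∀ k, Φ (Ψ k) = k) := by
  refine ⟨fun j => ⟨β ≫ L.map j.1, ?_⟩, fun k => ⟨R.map k.1 ≫ α, ?_⟩, fun j => rfl,
    fun k => rfl, fun j => ?_, fun k => ?_⟩
  · have hnat : adj.unit.app (R.obj B) ≫ R.map (L.map j.1) = j.1 ≫ adj.unit.app A := by
      simpa using (adj.unit.naturality j.1).symm
    calc β ≫ L.map (R.map (β ≫ L.map j.1))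
        = β ≫ L.map (R.map β) ≫ L.map (R.map (L.map j.1)) := by simp
      _ = β ≫ L.map (adj.unit.app (R.obj B)) ≫ L.map (R.map (L.map j.1)) := by
          rw [← Category.assoc, ← hβ_coassoc, Category.assoc]
      _ = (β ≫ L.map j.1) ≫ L.map (adj.unit.app A) := by
          rw [← Functor.map_comp, hnat, Functor.map_comp]; simp
  · have hnat : L.map (R.map k.1) ≫ adj.counit.app (L.obj A) = adj.counit.app B ≫ k.1 := by
      simpa using adj.counit.naturality k.1
    calc R.map (L.map (R.map k.1 ≫ α)) ≫ α
        = R.map (L.map (R.map k.1)) ≫ R.map (L.map α) ≫ α := by simp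
      _ = R.map (L.map (R.map k.1)) ≫ R.map (adj.counit.app (L.obj A)) ≫ α := by rw [← hα_assoc]
      _ = R.map (adj.counit.app B) ≫ R.map k.1 ≫ α := by
          rw [← Category.assoc, ← Functor.map_comp, hnat, Functor.map_comp]; simp
  · ext
    calc R.map (β ≫ L.map j.1) ≫ α
        = R.map β ≫ R.map (L.map j.1) ≫ α := by simp
      _ = R.map β ≫ R.map (adj.counit.app B) ≫ j.1 := by rw [j.2]
      _ = R.map (β ≫ adj.counit.app B) ≫ j.1 := by simp
      _ = j.1 := by rw [hβ_counit]; simp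
  · ext
    calc β ≫ L.map (R.map k.1 ≫ α)
        = (β ≫ L.map (R.map k.1)) ≫ L.map α := by simp
      _ = (k.1 ≫ L.map (adj.unit.app A)) ≫ L.map α := by rw [k.2]
      _ = k.1 ≫ L.map (adj.unit.app A ≫ α) := by simp
      _ = k.1 := by rw [hα_unit]; simp
end

section
/- Let L ⊣ R be an adjunction, (A, α) a T-algebra, (B, β) a W-coalgebra, g : A ⟶ R B a morphism with adjoint transpose g♯ = L g ≫ ε_B : L A ⟶ B, and let j : R B ⟶ A be a T-algebra morphism from (R B, R ε_B) to (A, α), with nucleus transpose k = β ≫ L j : B ⟶ L A. Then the pair of equations { g ≫ j = 𝟙_A and k ≫ L g = β } holds if and only if the pair of equations { R(g♯) ≫ j = α and k ≫ g♯ = 𝟙_B } holds. -/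
open CategoryTheory

universe v₁ u₁ v₂ u₂

variable {X : Type u₁} [Category.{v₁} X] {Y : Type u₂} [Category.{v₂} Y]

/-- Let `L ⊣ R` be an adjunction, `(A, α)` a T-algebra, `(B, β)` a W-coalgebra,
`g : A ⟶ R B` with adjoint transpose `g♯ = L g ≫ ε_B`, and `j : R B ⟶ A` a T-algebra morphism
`(R B, R ε_B) → (A, α)`, with nucleus transpose `k = β ≫ L j`. Then
`g ≫ j = 𝟙 A ∧ k ≫ L g = β` holds iff `R(g♯) ≫ j = α ∧ k ≫ g♯ = 𝟙 B` holds. -/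
theorem cut_equations_equivalent (L : X ⥤ Y) (R : Y ⥤ X) (adj : L ⊣ R)
    (A : X) (α : R.obj (L.obj A) ⟶ A)
    (hα_unit : adj.unit.app A ≫ α = 𝟙 A)
    (hα_assoc : R.map (adj.counit.app (L.obj A)) ≫ α = R.map (L.map α) ≫ α)
    (B : Y) (β : B ⟶ L.obj (R.obj B))
    (hβ_counit : β ≫ adj.counit.app B = 𝟙 B)
    (hβ_coassoc : β ≫ L.map (adj.unit.app (R.obj B)) = β ≫ L.map (R.map β))
    (g : A ⟶ R.obj B)
    (j : R.obj B ⟶ A)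
    (hj : R.map (L.map j) ≫ α = R.map (adj.counit.app B) ≫ j) :
    (g ≫ j = 𝟙 A ∧ (β ≫ L.map j) ≫ L.map g = β) ↔
    (R.map (L.map g ≫ adj.counit.app B) ≫ j = α ∧
      (β ≫ L.map j) ≫ (L.map g ≫ adj.counit.app B) = 𝟙 B) := by
  have unat : ∀ {a b : X} (f : a ⟶ b),
      f ≫ adj.unit.app b = adj.unit.app a ≫ R.map (L.map f) := by
    intro a b f
    simpa using adj.unit.naturality f
  constructor
  · rintro ⟨h1, h2⟩
    refine ⟨?_, ?_⟩
    · calc R.map (L.map g ≫ adj.counit.app B) ≫ j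
          = R.map (L.map g) ≫ (R.map (adj.counit.app B) ≫ j) := by
            simp [Functor.map_comp]
        _ = R.map (L.map g) ≫ (R.map (L.map j) ≫ α) := by rw [hj]
        _ = R.map (L.map (g ≫ j)) ≫ α := by simp [Functor.map_comp]
        _ = α := by rw [h1]; simp
    · calc (β ≫ L.map j) ≫ (L.map g ≫ adj.counit.app B)
          = ((β ≫ L.map j) ≫ L.map g) ≫ adj.counit.app B := by simp
        _ = β ≫ adj.counit.app B := by rw [h2]
        _ = 𝟙 B := hβ_counit
  · rintro ⟨h1, h2⟩
    have hR : R.map β ≫ R.map (L.map j) ≫ R.map (L.map g) ≫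
        R.map (adj.counit.app B) = 𝟙 (R.obj B) := by
      have := congrArg R.map h2
      simpa [Functor.map_comp] using this
    have e1 : adj.unit.app (R.obj B) ≫ R.map (L.map j) ≫ R.map (L.map g) ≫
        R.map (adj.counit.app B) = j ≫ g := by
      calc adj.unit.app (R.obj B) ≫ R.map (L.map j) ≫ R.map (L.map g) ≫
            R.map (adj.counit.app B)
          = (adj.unit.app (R.obj B) ≫ R.map (L.map j)) ≫ R.map (L.map g) ≫
            R.map (adj.counit.app B) := by simp
        _ = (j ≫ adj.unit.app A) ≫ R.map (L.map g) ≫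
            R.map (adj.counit.app B) := by rw [← unat j]
        _ = j ≫ (adj.unit.app A ≫ R.map (L.map g)) ≫
            R.map (adj.counit.app B) := by simp
        _ = j ≫ (g ≫ adj.unit.app (R.obj B)) ≫
            R.map (adj.counit.app B) := by rw [← unat g]
        _ = j ≫ g ≫ (adj.unit.app (R.obj B) ≫ R.map (adj.counit.app B)) := by
            simp
        _ = j ≫ g := by rw [adj.right_triangle_components]; simp
    refine ⟨?_, ?_⟩
    · calc g ≫ j
          = (g ≫ j) ≫ (adj.unit.app A ≫ α) := by rw [hα_unit]; simp
        _ = g ≫ (j ≫ adj.unit.app A) ≫ α := by simp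
        _ = g ≫ (adj.unit.app (R.obj B) ≫ R.map (L.map j)) ≫ α := by
            rw [unat j]
        _ = (g ≫ adj.unit.app (R.obj B)) ≫ R.map (L.map j) ≫ α := by simp
        _ = (adj.unit.app A ≫ R.map (L.map g)) ≫ R.map (L.map j) ≫ α := by
            rw [← unat g]
        _ = adj.unit.app A ≫ R.map (L.map g) ≫ R.map (adj.counit.app B) ≫ j := by
            rw [hj]; simp
        _ = adj.unit.app A ≫ R.map (L.map g ≫ adj.counit.app B) ≫ j := by
            simp [Functor.map_comp]
        _ = adj.unit.app A ≫ α := by rw [h1]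
        _ = 𝟙 A := hα_unit
    · have key : β = (β ≫ L.map j) ≫ L.map g := by
        calc β
            = β ≫ L.map (𝟙 (R.obj B)) := by simp
          _ = β ≫ L.map (R.map β ≫ R.map (L.map j) ≫ R.map (L.map g) ≫
                R.map (adj.counit.app B)) := by rw [hR]
          _ = (β ≫ L.map (R.map β)) ≫ L.map (R.map (L.map j) ≫
                R.map (L.map g) ≫ R.map (adj.counit.app B)) := by
              rw [L.map_comp, ← Category.assoc]
          _ = (β ≫ L.map (adj.unit.app (R.obj B))) ≫ L.map (R.map (L.map j) ≫
                R.map (L.map g) ≫ R.map (adj.counit.app B)) := by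
              rw [← hβ_coassoc]
          _ = β ≫ L.map (adj.unit.app (R.obj B) ≫ R.map (L.map j) ≫
                R.map (L.map g) ≫ R.map (adj.counit.app B)) := by
              rw [Category.assoc, ← L.map_comp]
          _ = β ≫ L.map (j ≫ g) := by rw [e1]
          _ = (β ≫ L.map j) ≫ L.map g := by simp [Functor.map_comp]
      exact key.symm
end

section
/- Let L ⊣ R be an adjunction and fix objects A of X, B of Y and a morphism g : A ⟶ R B with adjoint transpose g♯ = L g ≫ ε_B. Then the assignments (j, k) ↦ (α, β, j•, k•) with α = R(g♯) ≫ j, β = k ≫ L g, j• = R k, k• = L j, and (α, β, j•, k•) ↦ (j, k) with j = j• ≫ α, k = β ≫ k•, are mutually inverse bijections between the set of simple cuts (A, B, g, j, k) and the set of full cuts (A, B, α, β, g, j•, k•) with the same underlying data (A, B, g). In particular every simple cut determines a unique full cut and vice versa. -/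
open CategoryTheory

universe v₁ u₁ v₂ u₂

variable {X : Type u₁} [Category.{v₁} X] {Y : Type u₂} [Category.{v₂} Y]

/-- A simple cut for an adjunction `L ⊣ R`, on underlying data `A`, `B`, `g : A ⟶ R B`:
morphisms `j : R B ⟶ A` and `k : B ⟶ L A` such that `g` and `j`, resp. `k` and the adjoint
transpose `g♯ = L g ≫ ε_B`, form retractions, satisfying the simple-cut compatibility laws. -/
structure SimpleCut {L : X ⥤ Y} {R : Y ⥤ X} (adj : L ⊣ R)
    (A : X) (B : Y) (g : A ⟶ R.obj B) where
  j : R.obj B ⟶ A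
  k : B ⟶ L.obj A
  retract_j : g ≫ j = 𝟙 A
  retract_k : k ≫ (L.map g ≫ adj.counit.app B) = 𝟙 B
  law_j : R.map (adj.counit.app B) ≫ j = R.map (L.map j ≫ (L.map g ≫ adj.counit.app B)) ≫ j
  law_k : k ≫ L.map (adj.unit.app A) = k ≫ L.map (g ≫ R.map k)

/-- A full cut for an adjunction `L ⊣ R`, on underlying data `A`, `B`, `g : A ⟶ R B`:
a T-algebra structure `α` on `A`, a W-coalgebra structure `β` on `B`, and an interval
`(j•, k•)` satisfying the interval laws and the cut laws. -/
structure FullCut {L : X ⥤ Y} {R : Y ⥤ X} (adj : L ⊣ R)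
    (A : X) (B : Y) (g : A ⟶ R.obj B) where
  α : R.obj (L.obj A) ⟶ A
  β : B ⟶ L.obj (R.obj B)
  jb : R.obj B ⟶ R.obj (L.obj A)
  kb : L.obj (R.obj B) ⟶ L.obj A
  alg_unit : adj.unit.app A ≫ α = 𝟙 A
  alg_assoc : R.map (adj.counit.app (L.obj A)) ≫ α = R.map (L.map α) ≫ α
  coalg_counit : β ≫ adj.counit.app B = 𝟙 B
  coalg_coassoc : β ≫ L.map (adj.unit.app (R.obj B)) = β ≫ L.map (R.map β)
  interval_jb : jb = R.map (β ≫ kb)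
  interval_kb : kb = L.map (jb ≫ α)
  cut_one : g ≫ jb ≫ α = 𝟙 A
  cut_two : R.map (L.map g ≫ adj.counit.app B) ≫ jb ≫ α = α
  cut_three : β ≫ kb ≫ L.map g = β
  cut_four : β ≫ kb ≫ (L.map g ≫ adj.counit.app B) = 𝟙 B

section Aux

variable {L : X ⥤ Y} {R : Y ⥤ X} {adj : L ⊣ R} {A : X} {B : Y} {g : A ⟶ R.obj B}

private lemma SimpleCut.ext' {s t : SimpleCut adj A B g}
    (hj : s.j = t.j) (hk : s.k = t.k) : s = t := by
  cases s; cases t; cases hj; cases hk; rfl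

private lemma FullCut.ext' {s t : FullCut adj A B g}
    (hα : s.α = t.α) (hβ : s.β = t.β) (hjb : s.jb = t.jb) (hkb : s.kb = t.kb) : s = t := by
  cases s; cases t; cases hα; cases hβ; cases hjb; cases hkb; rfl

/-- helper: `R k ≫ α = j` for the full cut built from a simple cut. -/
private lemma simple_kalpha (s : SimpleCut adj A B g) :
    R.map s.k ≫ R.map (L.map g ≫ adj.counit.app B) ≫ s.j = s.j := by
  rw [← Category.assoc, ← R.map_comp, s.retract_k, R.map_id, Category.id_comp]

private lemma simple_alg_assoc (s : SimpleCut adj A B g) :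
    R.map (adj.counit.app (L.obj A)) ≫ R.map (L.map g ≫ adj.counit.app B) ≫ s.j =
      R.map (L.map (R.map (L.map g ≫ adj.counit.app B) ≫ s.j)) ≫
        R.map (L.map g ≫ adj.counit.app B) ≫ s.j := by
  have h := adj.counit_naturality (L.map g ≫ adj.counit.app B)
  calc R.map (adj.counit.app (L.obj A)) ≫ R.map (L.map g ≫ adj.counit.app B) ≫ s.j
      = R.map (adj.counit.app (L.obj A) ≫ (L.map g ≫ adj.counit.app B)) ≫ s.j := by
        simp only [Functor.map_comp, Category.assoc]
    _ = R.map (L.map (R.map (L.map g ≫ adj.counit.app B)) ≫ adj.counit.app B) ≫ s.j := by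
        simp only [Functor.id_obj] at h
        rw [h]
    _ = R.map (L.map (R.map (L.map g ≫ adj.counit.app B))) ≫ R.map (adj.counit.app B) ≫ s.j := by
        simp only [Functor.map_comp, Category.assoc]
    _ = R.map (L.map (R.map (L.map g ≫ adj.counit.app B))) ≫
          R.map (L.map s.j ≫ (L.map g ≫ adj.counit.app B)) ≫ s.j := by rw [s.law_j]
    _ = _ := by simp only [Functor.map_comp, Category.assoc]

private def Phi (s : SimpleCut adj A B g) : FullCut adj A B g where
  α := R.map (L.map g ≫ adj.counit.app B) ≫ s.j
  β := s.k ≫ L.map g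
  jb := R.map s.k
  kb := L.map s.j
  alg_unit := by
    calc adj.unit.app A ≫ R.map (L.map g ≫ adj.counit.app B) ≫ s.j
        = (adj.unit.app A ≫ R.map (L.map g)) ≫ R.map (adj.counit.app B) ≫ s.j := by
          simp only [Functor.map_comp, Category.assoc]
      _ = g ≫ (adj.unit.app (R.obj B) ≫ R.map (adj.counit.app B)) ≫ s.j := by
          rw [adj.unit_naturality g]; simp only [Category.assoc]
      _ = g ≫ s.j := by rw [adj.right_triangle_components, Category.id_comp]
      _ = 𝟙 A := s.retract_j
  alg_assoc := simple_alg_assoc s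
  coalg_counit := by rw [Category.assoc]; exact s.retract_k
  coalg_coassoc := by
    calc (s.k ≫ L.map g) ≫ L.map (adj.unit.app (R.obj B))
        = s.k ≫ L.map (g ≫ adj.unit.app (R.obj B)) := by
          rw [Category.assoc, ← L.map_comp]
      _ = s.k ≫ L.map (adj.unit.app A ≫ R.map (L.map g)) := by rw [adj.unit_naturality g]
      _ = (s.k ≫ L.map (adj.unit.app A)) ≫ L.map (R.map (L.map g)) := by
          rw [L.map_comp, Category.assoc]
      _ = (s.k ≫ L.map (g ≫ R.map s.k)) ≫ L.map (R.map (L.map g)) := by rw [s.law_k]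
      _ = _ := by simp only [Functor.map_comp, Category.assoc]
  interval_jb := by
    rw [Category.assoc, ← L.map_comp, s.retract_j, L.map_id, Category.comp_id]
  interval_kb := by
    rw [← Category.assoc, ← R.map_comp, s.retract_k, R.map_id, Category.id_comp]
  cut_one := by
    rw [simple_kalpha s]
    exact s.retract_j
  cut_two := by
    have key : R.map (adj.counit.app B) ≫ R.map s.k ≫
        R.map (L.map g ≫ adj.counit.app B) ≫ s.j = R.map (adj.counit.app B) ≫ s.j := by
      calc R.map (adj.counit.app B) ≫ R.map s.k ≫ R.map (L.map g ≫ adj.counit.app B) ≫ s.j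
          = R.map (adj.counit.app B ≫ s.k) ≫ R.map (L.map g ≫ adj.counit.app B) ≫ s.j := by
            simp only [Functor.map_comp, Category.assoc]
        _ = R.map (L.map (R.map s.k) ≫ adj.counit.app (L.obj A)) ≫
              R.map (L.map g ≫ adj.counit.app B) ≫ s.j := by rw [adj.counit_naturality s.k]
        _ = R.map (L.map (R.map s.k)) ≫ R.map (adj.counit.app (L.obj A)) ≫
              R.map (L.map g ≫ adj.counit.app B) ≫ s.j := by
            simp only [Functor.map_comp, Category.assoc]
        _ = R.map (L.map (R.map s.k)) ≫
              R.map (L.map (R.map (L.map g ≫ adj.counit.app B) ≫ s.j)) ≫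
              R.map (L.map g ≫ adj.counit.app B) ≫ s.j := by rw [simple_alg_assoc s]
        _ = R.map (L.map (R.map s.k ≫ R.map (L.map g ≫ adj.counit.app B) ≫ s.j)) ≫
              R.map (L.map g ≫ adj.counit.app B) ≫ s.j := by
            rw [← Category.assoc, ← R.map_comp, ← L.map_comp]
        _ = R.map (L.map s.j) ≫ R.map (L.map g ≫ adj.counit.app B) ≫ s.j := by
            rw [simple_kalpha s]
        _ = R.map (L.map s.j ≫ (L.map g ≫ adj.counit.app B)) ≫ s.j := by
            simp only [Functor.map_comp, Category.assoc]
        _ = R.map (adj.counit.app B) ≫ s.j := (s.law_j).symm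
    calc R.map (L.map g ≫ adj.counit.app B) ≫ R.map s.k ≫
          R.map (L.map g ≫ adj.counit.app B) ≫ s.j
        = R.map (L.map g) ≫ R.map (adj.counit.app B) ≫ R.map s.k ≫
            R.map (L.map g ≫ adj.counit.app B) ≫ s.j := by
          simp only [Functor.map_comp, Category.assoc]
      _ = R.map (L.map g) ≫ R.map (adj.counit.app B) ≫ s.j := by rw [key]
      _ = R.map (L.map g ≫ adj.counit.app B) ≫ s.j := by simp only [Functor.map_comp, Category.assoc]
  cut_three := by
    calc (s.k ≫ L.map g) ≫ L.map s.j ≫ L.map g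
        = s.k ≫ L.map (g ≫ s.j) ≫ L.map g := by
          simp only [Functor.map_comp, Category.assoc]
      _ = s.k ≫ L.map g := by rw [s.retract_j, L.map_id, Category.id_comp]
  cut_four := by
    calc (s.k ≫ L.map g) ≫ L.map s.j ≫ (L.map g ≫ adj.counit.app B)
        = s.k ≫ L.map (g ≫ s.j) ≫ (L.map g ≫ adj.counit.app B) := by
          simp only [Functor.map_comp, Category.assoc]
      _ = s.k ≫ (L.map g ≫ adj.counit.app B) := by
          rw [s.retract_j, L.map_id, Category.id_comp]
      _ = 𝟙 B := s.retract_k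

private def Psi (f : FullCut adj A B g) : SimpleCut adj A B g where
  j := f.jb ≫ f.α
  k := f.β ≫ f.kb
  retract_j := f.cut_one
  retract_k := by rw [Category.assoc]; exact f.cut_four
  law_j := by
    calc R.map (adj.counit.app B) ≫ f.jb ≫ f.α
        = R.map (adj.counit.app B) ≫ R.map (f.β ≫ f.kb) ≫ f.α := by rw [← f.interval_jb]
      _ = R.map ((adj.counit.app B ≫ f.β) ≫ f.kb) ≫ f.α := by
          simp only [Functor.map_comp, Category.assoc]
      _ = R.map ((L.map (R.map f.β) ≫ adj.counit.app (L.obj (R.obj B))) ≫ f.kb) ≫ f.α := by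
          rw [adj.counit_naturality f.β]
      _ = R.map (L.map (R.map f.β) ≫ (adj.counit.app (L.obj (R.obj B)) ≫ f.kb)) ≫ f.α := by
          rw [Category.assoc]
      _ = R.map (L.map (R.map f.β) ≫ (L.map (R.map f.kb) ≫ adj.counit.app (L.obj A))) ≫
            f.α := by rw [adj.counit_naturality f.kb]
      _ = R.map (L.map (R.map f.β ≫ R.map f.kb)) ≫ R.map (adj.counit.app (L.obj A)) ≫
            f.α := by simp only [Functor.map_comp, Category.assoc]
      _ = R.map (L.map (R.map f.β ≫ R.map f.kb)) ≫ R.map (L.map f.α) ≫ f.α := by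
          rw [f.alg_assoc]
      _ = R.map (L.map ((R.map f.β ≫ R.map f.kb) ≫ f.α)) ≫ f.α := by
          rw [← Category.assoc, ← R.map_comp, ← L.map_comp]
      _ = R.map (L.map (f.jb ≫ f.α)) ≫ f.α := by
          rw [← R.map_comp, ← f.interval_jb]
      _ = R.map f.kb ≫ f.α := by rw [← f.interval_kb]
      _ = R.map f.kb ≫ R.map (L.map g ≫ adj.counit.app B) ≫ f.jb ≫ f.α := by rw [f.cut_two]
      _ = R.map (L.map (f.jb ≫ f.α) ≫ (L.map g ≫ adj.counit.app B)) ≫ f.jb ≫ f.α := by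
          rw [← f.interval_kb]; simp only [Functor.map_comp, Category.assoc]
  law_k := by
    have hstep : f.kb ≫ L.map (adj.unit.app A) = L.map (adj.unit.app (R.obj B)) ≫
        L.map (R.map f.kb) := by
      calc f.kb ≫ L.map (adj.unit.app A)
          = L.map ((f.jb ≫ f.α) ≫ adj.unit.app A) := by
            rw [f.interval_kb, ← L.map_comp]
        _ = L.map (f.jb ≫ adj.unit.app (R.obj (L.obj A)) ≫ R.map (L.map f.α)) := by
            rw [Category.assoc, ← adj.unit_naturality f.α]
        _ = L.map ((f.jb ≫ adj.unit.app (R.obj (L.obj A))) ≫ R.map (L.map f.α)) := by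
            rw [Category.assoc]
        _ = L.map ((adj.unit.app (R.obj B) ≫ R.map (L.map f.jb)) ≫ R.map (L.map f.α)) := by
            rw [adj.unit_naturality f.jb]
        _ = L.map (adj.unit.app (R.obj B)) ≫ L.map (R.map (L.map f.jb ≫ L.map f.α)) := by
            simp only [Functor.map_comp, Category.assoc]
        _ = L.map (adj.unit.app (R.obj B)) ≫ L.map (R.map f.kb) := by
            rw [← L.map_comp f.jb f.α, ← f.interval_kb]
    calc (f.β ≫ f.kb) ≫ L.map (adj.unit.app A)
        = f.β ≫ f.kb ≫ L.map (adj.unit.app A) := by rw [Category.assoc]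
      _ = f.β ≫ L.map (adj.unit.app (R.obj B)) ≫ L.map (R.map f.kb) := by rw [hstep]
      _ = (f.β ≫ L.map (adj.unit.app (R.obj B))) ≫ L.map (R.map f.kb) := by
          rw [Category.assoc]
      _ = (f.β ≫ L.map (R.map f.β)) ≫ L.map (R.map f.kb) := by rw [f.coalg_coassoc]
      _ = (f.β ≫ f.kb ≫ L.map g) ≫ L.map (R.map f.β) ≫ L.map (R.map f.kb) := by
          rw [f.cut_three, Category.assoc]
      _ = (f.β ≫ f.kb) ≫ L.map (g ≫ R.map (f.β ≫ f.kb)) := by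
          simp only [Functor.map_comp, Category.assoc]

end Aux

/-- Every simple cut determines a unique full cut with the same underlying data `(A, B, g)`,
and vice versa: the assignments `(j, k) ↦ (α, β, j•, k•)` with `α = R(g♯) ≫ j`, `β = k ≫ L g`,
`j• = R k`, `k• = L j`, and `(α, β, j•, k•) ↦ (j, k)` with `j = j• ≫ α`, `k = β ≫ k•`, are
mutually inverse bijections. -/
theorem simpleCut_equiv_fullCut {L : X ⥤ Y} {R : Y ⥤ X} (adj : L ⊣ R)
    (A : X) (B : Y) (g : A ⟶ R.obj B) :
    ∃ (Φ : SimpleCut adj A B g → FullCut adj A B g)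
      (Ψ : FullCut adj A B g → SimpleCut adj A B g),
      (∀ s, (Φ s).α = R.map (L.map g ≫ adj.counit.app B) ≫ s.j ∧
            (Φ s).β = s.k ≫ L.map g ∧
            (Φ s).jb = R.map s.k ∧
            (Φ s).kb = L.map s.j) ∧
      (∀ f, (Ψ f).j = f.jb ≫ f.α ∧ (Ψ f).k = f.β ≫ f.kb) ∧
      (∀ s, Ψ (Φ s) = s) ∧
      (∀ f, Φ (Ψ f) = f) := by
  refine ⟨Phi, Psi, fun s => ⟨rfl, rfl, rfl, rfl⟩, fun f => ⟨rfl, rfl⟩, ?_, ?_⟩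
  · intro s
    apply SimpleCut.ext'
    · show R.map s.k ≫ R.map (L.map g ≫ adj.counit.app B) ≫ s.j = s.j
      exact simple_kalpha s
    · show (s.k ≫ L.map g) ≫ L.map s.j = s.k
      rw [Category.assoc, ← L.map_comp, s.retract_j, L.map_id, Category.comp_id]
  · intro f
    apply FullCut.ext'
    · exact f.cut_two
    · show (f.β ≫ f.kb) ≫ L.map g = f.β
      rw [Category.assoc]; exact f.cut_three
    · show R.map (f.β ≫ f.kb) = f.jb
      exact f.interval_jb.symm
    · show L.map (f.jb ≫ f.α) = f.kb
      exact f.interval_kb.symm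
end

section
/- Let L ⊣ R be an adjunction and (A, B, α, β, g, j•, k•) a full cut. If the two components of the interval coincide, in the sense that k• is the adjoint transpose of j• along L ⊣ R (i.e. k• = L(j•) ≫ ε_{L A}), then j = j• ≫ α : R B ⟶ A and k = β ≫ k• : B ⟶ L A are isomorphisms; in particular A ≅ R B and B ≅ L A. -/
open CategoryTheory

universe v₁ u₁ v₂ u₂

variable {X : Type u₁} [Category.{v₁} X] {Y : Type u₂} [Category.{v₂} Y]

/-- If in a full cut the two components of the interval coincide, i.e. `k•` is the adjoint
transpose of `j•` along `L ⊣ R`, then `j = j• ≫ α` and `k = β ≫ k•` are isomorphisms;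
in particular `A ≅ R B` and `B ≅ L A`. -/
theorem fullCut_coincident_interval_iso {L : X ⥤ Y} {R : Y ⥤ X} (adj : L ⊣ R)
    {A : X} {B : Y} {g : A ⟶ R.obj B} (f : FullCut adj A B g)
    (hcoin : f.kb = L.map f.jb ≫ adj.counit.app (L.obj A)) :
    IsIso (f.jb ≫ f.α) ∧ IsIso (f.β ≫ f.kb) ∧
    Nonempty (A ≅ R.obj B) ∧ Nonempty (B ≅ L.obj A) := by
  obtain ⟨α, β, jb, kb, alg_unit, alg_assoc, coalg_counit, coalg_coassoc,
    interval_jb, interval_kb, cut_one, cut_two, cut_three, cut_four⟩ := f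
  simp only at *
  -- k := β ≫ kb has two-sided inverse g♯ = L g ≫ ε_B
  have hk1 : (β ≫ kb) ≫ (L.map g ≫ adj.counit.app B) = 𝟙 B := by
    simpa [Category.assoc] using cut_four
  have hk2 : (L.map g ≫ adj.counit.app B) ≫ (β ≫ kb) = 𝟙 (L.obj A) := by
    have nat1 : adj.counit.app B ≫ β = L.map (R.map β) ≫ adj.counit.app (L.obj (R.obj B)) :=
      (adj.counit.naturality β).symm
    have nat2 : adj.counit.app (L.obj (R.obj B)) ≫ kb
        = L.map (R.map kb) ≫ adj.counit.app (L.obj A) :=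
      (adj.counit.naturality kb).symm
    calc (L.map g ≫ adj.counit.app B) ≫ (β ≫ kb)
        = L.map g ≫ (adj.counit.app B ≫ β) ≫ kb := by simp [Category.assoc]
      _ = L.map g ≫ L.map (R.map β) ≫ adj.counit.app (L.obj (R.obj B)) ≫ kb := by
          rw [nat1]; simp [Category.assoc]
      _ = L.map g ≫ L.map (R.map β) ≫ L.map (R.map kb) ≫ adj.counit.app (L.obj A) := by
          rw [nat2]
      _ = L.map g ≫ L.map jb ≫ adj.counit.app (L.obj A) := by
          rw [interval_jb]; simp [Functor.map_comp, Category.assoc]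
      _ = L.map g ≫ kb := by rw [← hcoin]
      _ = L.map (g ≫ jb ≫ α) := by rw [interval_kb]; simp [Functor.map_comp]
      _ = 𝟙 (L.obj A) := by rw [cut_one]; simp
  -- key: kb ≫ L g ≫ ε_B = ε_B
  have hkey : kb ≫ L.map g ≫ adj.counit.app B = adj.counit.app B := by
    have nat3 : adj.counit.app (L.obj A) ≫ (L.map g ≫ adj.counit.app B)
        = L.map (R.map (L.map g ≫ adj.counit.app B)) ≫ adj.counit.app B :=
      (adj.counit.naturality (L.map g ≫ adj.counit.app B)).symm
    calc kb ≫ L.map g ≫ adj.counit.app B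
        = L.map jb ≫ adj.counit.app (L.obj A) ≫ (L.map g ≫ adj.counit.app B) := by
          rw [hcoin]; simp [Category.assoc]
      _ = L.map jb ≫ L.map (R.map (L.map g ≫ adj.counit.app B)) ≫ adj.counit.app B := by
          rw [nat3]
      _ = L.map (jb ≫ R.map (L.map g ≫ adj.counit.app B)) ≫ adj.counit.app B := by
          simp [Functor.map_comp, Category.assoc]
      _ = L.map (R.map ((β ≫ kb) ≫ (L.map g ≫ adj.counit.app B))) ≫ adj.counit.app B := by
          rw [interval_jb]; simp [Functor.map_comp, Category.assoc]
      _ = adj.counit.app B := by rw [hk1]; simp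
  have hj2 : (jb ≫ α) ≫ g = 𝟙 (R.obj B) := by
    have hg : g = adj.unit.app A ≫ R.map (L.map g ≫ adj.counit.app B) := by
      simp
    have natη : α ≫ adj.unit.app A = adj.unit.app (R.obj (L.obj A)) ≫ R.map (L.map α) :=
      (adj.unit.naturality α)
    have natη2 : jb ≫ adj.unit.app (R.obj (L.obj A))
        = adj.unit.app (R.obj B) ≫ R.map (L.map jb) :=
      (adj.unit.naturality jb)
    calc (jb ≫ α) ≫ g
        = jb ≫ (α ≫ adj.unit.app A) ≫ R.map (L.map g ≫ adj.counit.app B) := by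
          conv_lhs => rw [hg]
          simp [Category.assoc]
      _ = (jb ≫ adj.unit.app (R.obj (L.obj A))) ≫ R.map (L.map α)
            ≫ R.map (L.map g ≫ adj.counit.app B) := by
          rw [natη]; simp [Category.assoc]
      _ = adj.unit.app (R.obj B) ≫ R.map (L.map jb) ≫ R.map (L.map α)
            ≫ R.map (L.map g ≫ adj.counit.app B) := by
          rw [natη2]; simp [Category.assoc]
      _ = adj.unit.app (R.obj B) ≫ R.map (kb ≫ L.map g ≫ adj.counit.app B) := by
          rw [interval_kb]; simp [Functor.map_comp, Category.assoc]
      _ = adj.unit.app (R.obj B) ≫ R.map (adj.counit.app B) := by rw [hkey]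
      _ = 𝟙 (R.obj B) := adj.right_triangle_components B
  have hj1 : g ≫ (jb ≫ α) = 𝟙 A := by simpa [Category.assoc] using cut_one
  have ij : IsIso (jb ≫ α) := ⟨g, hj2, hj1⟩
  have ik : IsIso (β ≫ kb) := ⟨L.map g ≫ adj.counit.app B, hk1, hk2⟩
  exact ⟨ij, ik, ⟨⟨g, jb ≫ α, hj1, hj2⟩⟩, ⟨⟨β ≫ kb, L.map g ≫ adj.counit.app B, hk1, hk2⟩⟩⟩
end

section
/- Let C be a small category, (A, φ) a cut-coalgebra over C, and c an object of C. The pair (yoneda.obj c, identity of O(yoneda.obj c)) is a cut-coalgebra, and the set of cut-coalgebra morphisms from (A, φ) to (yoneda.obj c, 𝟙) is in bijection, naturally in c, with the set { δ ∈ Nat(A, yoneda.obj c) | φ_c(δ) = δ } of cocones under A with vertex c that are fixed by the idempotent φ. -/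
open CategoryTheory Opposite

universe u

variable (C : Type u) [SmallCategory C]

/-- `(A, φ)` is a cut-coalgebra when `φ : O A ⟶ O A` is an idempotent copresheaf endomorphism
whose image `Spec φ` splits through `A`. -/
def IsCutCoalgebra (A : Cᵒᵖ ⥤ Type u)
    (φ : ((isbellO C).obj A).unop ⟶ ((isbellO C).obj A).unop) : Prop :=
  φ ≫ φ = φ ∧
  ∃ (q : (isbellSpec C).obj ((isbellO C).obj A) ⟶ A)
    (s : A ⟶ (isbellSpec C).obj ((isbellO C).obj A)),
    s ≫ q = 𝟙 A ∧ q ≫ s = (isbellSpec C).map φ.op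

/-- The set of morphisms of cut-coalgebras from `(A, φ)` to `(A′, φ′)`: presheaf maps
`f : A ⟶ A′` with `φ′ ≫ O f = O f ≫ φ`. -/
def CutCoalgebraHoms (A A' : Cᵒᵖ ⥤ Type u)
    (φ : ((isbellO C).obj A).unop ⟶ ((isbellO C).obj A).unop)
    (φ' : ((isbellO C).obj A').unop ⟶ ((isbellO C).obj A').unop) : Type u :=
  { f : A ⟶ A' // φ' ≫ ((isbellO C).map f).unop = ((isbellO C).map f).unop ≫ φ }

private def cutQ (c : C) : (isbellSpec C).obj ((isbellO C).obj (yoneda.obj c)) ⟶ yoneda.obj c where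
  app _ := TypeCat.ofHom fun η => η.app c (𝟙 (yoneda.obj c))
  naturality _ _ _ := rfl

private def cutS (c : C) : yoneda.obj c ⟶ (isbellSpec C).obj ((isbellO C).obj (yoneda.obj c)) where
  app d := TypeCat.ofHom fun h =>
    { app := fun x => TypeCat.ofHom fun (g : yoneda.obj c ⟶ yoneda.obj x) =>
        (h ≫ g.app (op c) (𝟙 c) : unop d ⟶ x)
      naturality := fun x x' w => by
        ext g
        exact (Category.assoc _ _ _).symm }
  naturality d d' u := by
    ext h
    exact NatTrans.ext (funext fun x => by ext g; exact Category.assoc _ _ _)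

private theorem cutS_cutQ (c : C) : cutS C c ≫ cutQ C c = 𝟙 (yoneda.obj c) := by
  ext d h
  exact Category.comp_id h

private theorem cutQ_cutS (c : C) : cutQ C c ≫ cutS C c = 𝟙 _ := by
  ext d η
  refine NatTrans.ext (funext fun x => ConcreteCategory.hom_ext _ _ fun g => ?_)
  obtain ⟨u, rfl⟩ := yoneda.map_surjective (g : yoneda.obj c ⟶ yoneda.obj x)
  have hnat : η.app x (𝟙 (yoneda.obj c) ≫ yoneda.map u) = η.app c (𝟙 _) ≫ u :=
    types_congr_hom (η.naturality u) (𝟙 (yoneda.obj c))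
  show η.app c (𝟙 _) ≫ (𝟙 c ≫ u) = η.app x (yoneda.map u)
  calc η.app c (𝟙 _) ≫ (𝟙 c ≫ u) = η.app c (𝟙 _) ≫ u := by rw [Category.id_comp]
    _ = η.app x (𝟙 _ ≫ yoneda.map u) := hnat.symm
    _ = η.app x (yoneda.map u) := by rw [Category.id_comp]
private theorem cut_fwd (A : Cᵒᵖ ⥤ Type u)
    (φ : ((isbellO C).obj A).unop ⟶ ((isbellO C).obj A).unop) (c : C) (f : A ⟶ yoneda.obj c)
    (hf : 𝟙 _ ≫ ((isbellO C).map f).unop = ((isbellO C).map f).unop ≫ φ) :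
    φ.app c f = f := by
  have h2 : f ≫ 𝟙 (yoneda.obj c) = φ.app c (f ≫ 𝟙 (yoneda.obj c)) :=
    types_congr_hom (congrArg (fun t => t.app c) hf) (𝟙 (yoneda.obj c))
  rw [Category.comp_id] at h2
  exact h2.symm

private theorem cut_bwd (A : Cᵒᵖ ⥤ Type u)
    (φ : ((isbellO C).obj A).unop ⟶ ((isbellO C).obj A).unop) (c : C) (δ : A ⟶ yoneda.obj c)
    (hδ : φ.app c δ = δ) :
    𝟙 _ ≫ ((isbellO C).map δ).unop = ((isbellO C).map δ).unop ≫ φ := by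
  refine NatTrans.ext (funext fun x => ConcreteCategory.hom_ext _ _ fun g => ?_)
  obtain ⟨u, rfl⟩ := yoneda.map_surjective (g : yoneda.obj c ⟶ yoneda.obj x)
  have hnat : φ.app x (δ ≫ yoneda.map u) = φ.app c δ ≫ yoneda.map u :=
    types_congr_hom (φ.naturality u) δ
  show δ ≫ yoneda.map u = φ.app x (δ ≫ yoneda.map u)
  rw [hnat, hδ]

/-- For a cut-coalgebra `(A, φ)` and an object `c` of `C`: the pair `(yoneda.obj c, 𝟙)` is a
cut-coalgebra, and the cut-coalgebra morphisms from `(A, φ)` to `(yoneda.obj c, 𝟙)` are in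
bijection, naturally in `c`, with the cocones under `A` with vertex `c` fixed by `φ`. -/
theorem cutCoalgebraHoms_to_representable (A : Cᵒᵖ ⥤ Type u)
    (φ : ((isbellO C).obj A).unop ⟶ ((isbellO C).obj A).unop)
    (h : IsCutCoalgebra C A φ) :
    (∀ c : C, IsCutCoalgebra C (yoneda.obj c) (𝟙 _)) ∧
    ∃ e : ∀ c : C, CutCoalgebraHoms C A (yoneda.obj c) φ (𝟙 _) ≃
        { δ : A ⟶ yoneda.obj c // φ.app c δ = δ },
      ∀ (c c' : C) (u : c ⟶ c') (f : CutCoalgebraHoms C A (yoneda.obj c) φ (𝟙 _))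
        (hf : 𝟙 _ ≫ ((isbellO C).map (f.1 ≫ yoneda.map u)).unop
            = ((isbellO C).map (f.1 ≫ yoneda.map u)).unop ≫ φ),
        (e c' ⟨f.1 ≫ yoneda.map u, hf⟩).1 = (e c f).1 ≫ yoneda.map u := by
  constructor
  · intro c
    refine ⟨Category.comp_id _, cutQ C c, cutS C c, cutS_cutQ C c, ?_⟩
    have hop : ((𝟙 (((isbellO C).obj (yoneda.obj c)).unop)).op)
        = 𝟙 ((isbellO C).obj (yoneda.obj c)) := rfl
    rw [hop, (isbellSpec C).map_id ((isbellO C).obj (yoneda.obj c))]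
    exact cutQ_cutS C c
  · refine ⟨fun c =>
      { toFun := fun f => ⟨f.1, cut_fwd C A φ c f.1 f.2⟩
        invFun := fun δ => ⟨δ.1, cut_bwd C A φ c δ.1 δ.2⟩
        left_inv := fun _ => rfl
        right_inv := fun _ => rfl }, fun c c' u f hf => rfl⟩
end

section
/- Let C be a small category with all small colimits. Then for every presheaf A : Cᵒᵖ ⥤ Type and every idempotent natural transformation φ : O A ⟶ O A of the copresheaf O A (where (O A)(c) = Nat(A, yoneda.obj c)), the copresheaf of φ-fixed cocones, sending c to { δ ∈ Nat(A, yoneda.obj c) | φ_c(δ) = δ }, is corepresentable: there is an object r of C and a natural isomorphism between this copresheaf and C(r, −). In particular, a category with all loose (small) colimits has all tight colimits. -/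
open CategoryTheory Opposite Limits

universe u

variable (C : Type u) [SmallCategory C]

/-- The copresheaf of coconesUnder under a presheaf `A`: `c ↦ Nat(A, yoneda.obj c)`. -/
def coconesUnder (A : Cᵒᵖ ⥤ Type u) : C ⥤ Type u :=
  yoneda ⋙ coyoneda.obj (op A)

/-- Given an idempotent `φ` on the copresheaf of coconesUnder under `A`, the copresheaf of
`φ`-fixed coconesUnder: `c ↦ { δ ∈ Nat(A, yoneda.obj c) | φ_c(δ) = δ }`. -/
@[simps]
def fixedCocones (A : Cᵒᵖ ⥤ Type u) (φ : coconesUnder C A ⟶ coconesUnder C A) : C ⥤ Type u where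
  obj c := { δ : A ⟶ yoneda.obj c // φ.app c δ = δ }
  map {c c'} f := TypeCat.ofHom fun δ =>
    ⟨δ.1 ≫ yoneda.map f, by
      have h : φ.app c' (δ.1 ≫ yoneda.map f) = φ.app c δ.1 ≫ yoneda.map f :=
        ConcreteCategory.congr_hom (φ.naturality f) δ.1
      rw [h, δ.2]⟩
  map_id := by
    intro c
    apply ConcreteCategory.hom_ext
    intro δ
    apply Subtype.ext
    simp
  map_comp := by
    intro c c' c'' f g
    apply ConcreteCategory.hom_ext
    intro δ
    apply Subtype.ext
    simp

/-- If a small category `C` has all small colimits, then for every presheaf `A` and every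
idempotent `φ` on the copresheaf of coconesUnder under `A`, the copresheaf of `φ`-fixed coconesUnder is
corepresentable; i.e. every tight colimit exists: loose colimit completeness implies tight
colimit completeness. -/
theorem fixedCocones_corepresentable [HasColimits C]
    (A : Cᵒᵖ ⥤ Type u) (φ : coconesUnder C A ⟶ coconesUnder C A) (hφ : φ ≫ φ = φ) :
    ∃ r : C, Nonempty (fixedCocones C A φ ≅ coyoneda.obj (op r)) := by
  -- Corepresent `coconesUnder C A` by the "loose colimit" `ℓ` of `A`.
  let L : (Cᵒᵖ ⥤ Type u) ⥤ C := uliftYoneda.{u}.leftKanExtension (𝟭 C)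
  let adj : L ⊣ Presheaf.restrictedULiftYoneda.{u} (𝟭 C) :=
    Presheaf.uliftYonedaAdjunction.{0} L (uliftYoneda.{u}.leftKanExtensionUnit (𝟭 C))
  let ℓ : C := L.obj A
  let η : ∀ c : C, (ℓ ⟶ c) ≃ (A ⟶ yoneda.obj c) := fun c =>
    (adj.homEquiv A c).trans (Iso.homCongr (Iso.refl A) (uliftYonedaIsoYoneda.{u}.app c))
  have h1 : ∀ (c c' : C) (g : ℓ ⟶ c) (f : c ⟶ c'),
      η c' (g ≫ f) = η c g ≫ yoneda.map f := fun c c' g f => by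
    simp only [η, Equiv.trans_apply, adj.homEquiv_naturality_right, Iso.homCongr_apply]
    ext X x
    rfl
  let u : A ⟶ yoneda.obj ℓ := η ℓ (𝟙 ℓ)
  let e : ℓ ⟶ ℓ := (η ℓ).symm (φ.app ℓ u)
  have h2 : ∀ (c : C) (g : ℓ ⟶ c), φ.app c (η c g) = η c (e ≫ g) := by
    intro c g
    have hg : η c g = u ≫ yoneda.map g := by
      simpa using h1 ℓ c (𝟙 ℓ) g
    have hnat : φ.app c (u ≫ yoneda.map g) = φ.app ℓ u ≫ yoneda.map g :=
      ConcreteCategory.congr_hom (φ.naturality g) u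
    rw [hg, hnat, h1 ℓ c e g]
    congr 1
    exact ((η ℓ).apply_symm_apply (φ.app ℓ u)).symm
  let r : C := coequalizer e (𝟙 ℓ)
  let π : ℓ ⟶ r := coequalizer.π e (𝟙 ℓ)
  have hcond : e ≫ π = π := by
    simpa using coequalizer.condition e (𝟙 ℓ)
  refine ⟨r, ⟨NatIso.ofComponents (fun c => Equiv.toIso {
    toFun := fun δ => coequalizer.desc ((η c).symm δ.1) (by
      rw [Category.id_comp]
      apply (η c).injective
      rw [← h2 c ((η c).symm δ.1), (η c).apply_symm_apply, δ.2])
    invFun := fun g => ⟨η c (π ≫ g), by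
      rw [h2 c (π ≫ g), ← Category.assoc, hcond]⟩
    left_inv := fun δ => by
      apply Subtype.ext
      show (η c) (π ≫ coequalizer.desc ((η c).symm δ.1) _) = δ.1
      rw [coequalizer.π_desc, (η c).apply_symm_apply]
    right_inv := fun g => by
      apply coequalizer.hom_ext
      rw [coequalizer.π_desc, (η c).symm_apply_apply] }) ?_⟩⟩
  intro c c' f
  refine ConcreteCategory.hom_ext _ _ (fun δ => ?_)
  show coequalizer.desc ((η c').symm (δ.1 ≫ yoneda.map f)) _ =
    coequalizer.desc ((η c).symm δ.1) _ ≫ f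
  have key : (η c').symm (δ.1 ≫ yoneda.map f) = (η c).symm δ.1 ≫ f := by
    apply (η c').injective
    rw [(η c').apply_symm_apply, h1 c c' ((η c).symm δ.1) f, (η c).apply_symm_apply]
  apply coequalizer.hom_ext
  simp only [coequalizer.π_desc, coequalizer.π_desc_assoc, key]
end
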